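/- arXiv:1306.6253 — 4 statements merged into one kernel-verified Lean document; each statement's English description precedes it below -/
import Mathlib

section
/- Let V = ℂⁿ with basis v₁,…,vₙ, e₁ = Σ vᵢ, p₂ = Σ vⱼ², and τ_{kl} = v_k v_l − v_k² − v_l² + p₂ for k < l. Let T ⊆ Sym²V be the span of all τ_{kl}. Then T ∩ e₁·V = 0, where e₁·V = { e₁·w : w ∈ V } ⊆ Sym²V. -/
open MvPolynomial

namespace SpanTauAux

variable {n : ℕ}

/-- Exponent vector of the monomial `X a * X b`. -/
noncomputable def N (a b : Fin n) : Fin n →₀ ℕ := Finsupp.single a 1 + Finsupp.single b 1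

lemma N_eq_iff (a b c d : Fin n) : N a b = N c d ↔ (a = c ∧ b = d) ∨ (a = d ∧ b = c) := by
  unfold N
  rw [Finsupp.single_add_single_eq_single_add_single one_ne_zero one_ne_zero]
  norm_num

lemma coeff_N_XX (a b i j : Fin n) :
    coeff (N a b) (X i * X j : MvPolynomial (Fin n) ℂ) =
      if (i = a ∧ j = b) ∨ (i = b ∧ j = a) then 1 else 0 := by
  have h : (X i * X j : MvPolynomial (Fin n) ℂ) = monomial (N i j) 1 := by
    rw [← pow_one (X i), ← pow_one (X j), X_pow_eq_monomial, X_pow_eq_monomial,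
      monomial_mul, one_mul]; rfl
  rw [h, coeff_monomial]
  by_cases hc : N i j = N a b
  · rw [if_pos hc, if_pos ((N_eq_iff i j a b).mp hc)]
  · rw [if_neg hc, if_neg (fun hh => hc ((N_eq_iff i j a b).mpr hh))]

lemma coeff_N_Xsq (a b i : Fin n) :
    coeff (N a b) ((X i : MvPolynomial (Fin n) ℂ) ^ 2) =
      if i = a ∧ i = b then 1 else 0 := by
  rw [sq, coeff_N_XX]
  by_cases h : i = a ∧ i = b <;> simp [h]
  tauto

lemma coeff_N_p2 (a b : Fin n) :
    coeff (N a b) (∑ i : Fin n, (X i : MvPolynomial (Fin n) ℂ) ^ 2) =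
      if a = b then 1 else 0 := by
  rw [coeff_sum]
  simp only [coeff_N_Xsq]
  by_cases h : a = b
  · subst h; simp
  · rw [if_neg h]
    apply Finset.sum_eq_zero
    intro i _
    rw [if_neg]
    rintro ⟨rfl, rfl⟩; exact h rfl


/-- The linear functional killing all the `τ_{kl}`. -/
noncomputable def G (m : Fin n) : MvPolynomial (Fin n) ℂ →ₗ[ℂ] ℂ :=
  (∑ j : Fin n, lcoeff ℂ (N m j))
    - (2⁻¹ : ℂ) • ((∑ k : Fin n, ∑ l : Fin n, lcoeff ℂ (N k l)) - ∑ k : Fin n, lcoeff ℂ (N k k))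

lemma G_apply (m : Fin n) (q : MvPolynomial (Fin n) ℂ) :
    G m q = (∑ j : Fin n, coeff (N m j) q)
      - 2⁻¹ * ((∑ k : Fin n, ∑ l : Fin n, coeff (N k l) q) - ∑ k : Fin n, coeff (N k k) q) := by
  simp [G, LinearMap.sub_apply, LinearMap.smul_apply, LinearMap.sum_apply]

/-- coefficient of the full τ polynomial -/
lemma coeff_N_tau (a b k l : Fin n) :
    coeff (N a b) (X k * X l - X k ^ 2 - X l ^ 2 + ∑ i : Fin n, (X i : MvPolynomial (Fin n) ℂ) ^ 2)
      = (if (k = a ∧ l = b) ∨ (k = b ∧ l = a) then 1 else 0)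
        - (if k = a ∧ k = b then 1 else 0) - (if l = a ∧ l = b then 1 else 0)
        + (if a = b then 1 else 0) := by
  rw [coeff_add, coeff_sub, coeff_sub, coeff_N_XX, coeff_N_Xsq, coeff_N_Xsq, coeff_N_p2]

lemma G_tau (m k l : Fin n) (hkl : k ≠ l) :
    G m (X k * X l - X k ^ 2 - X l ^ 2 + ∑ i : Fin n, (X i : MvPolynomial (Fin n) ℂ) ^ 2) = 0 := by
  rw [G_apply]
  simp only [coeff_N_tau, or_self, and_self, eq_self_iff_true, if_true]
  have hP : ∀ a b : Fin n, (if (k = a ∧ l = b) ∨ (k = b ∧ l = a) then (1:ℂ) else 0)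
      = (if k = a ∧ l = b then 1 else 0) + (if l = a ∧ k = b then 1 else 0) := by
    intro a b
    by_cases h1 : k = a ∧ l = b <;> by_cases h2 : l = a ∧ k = b
    · exact absurd (h2.2.trans h1.2.symm) hkl
    all_goals simp [h1, h2]
    · rintro rfl
      exact fun h => hkl (h1.1.trans h1.2.symm)
    · rintro rfl
      exact fun h => hkl (h2.2.trans h2.1.symm)
    · exact fun hb ha => h2 ⟨ha, hb⟩
  have hs : ∀ (P : Prop) (_ : Decidable P) (c : Fin n),
      ∑ j : Fin n, (if P ∧ c = j then (1:ℂ) else 0) = if P then 1 else 0 := by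
    intro P _ c
    by_cases hP' : P <;> simp [hP']
  have hone : ∀ c : Fin n, ∑ j : Fin n, (if c = j then (1:ℂ) else 0) = 1 := by
    intro c; simp
  have S1 : ∀ a : Fin n,
      (∑ j : Fin n, ((if (k = a ∧ l = j) ∨ (k = j ∧ l = a) then (1:ℂ) else 0)
        - (if k = a ∧ k = j then 1 else 0) - (if l = a ∧ l = j then 1 else 0)
        + (if a = j then 1 else 0))) = 1 := by
    intro a
    simp only [hP, Finset.sum_add_distrib, Finset.sum_sub_distrib]
    rw [hs _ _ _, hs _ _ _, hs _ _ _, hs _ _ _, hone]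
    ring
  have S3 : (∑ a : Fin n, ((if k = a ∧ l = a then (1:ℂ) else 0)
        - (if k = a then 1 else 0) - (if l = a then 1 else 0) + 1)) = (n : ℂ) - 2 := by
    simp only [Finset.sum_add_distrib, Finset.sum_sub_distrib]
    have h0 : (∑ a : Fin n, if k = a ∧ l = a then (1:ℂ) else 0) = 0 :=
      Finset.sum_eq_zero fun a _ => if_neg (fun h => hkl (h.1.trans h.2.symm))
    rw [h0, hone, hone]
    simp
    ring
  have S2 : (∑ a : Fin n, ∑ b : Fin n, ((if (k = a ∧ l = b) ∨ (k = b ∧ l = a) then (1:ℂ) else 0)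
        - (if k = a ∧ k = b then 1 else 0) - (if l = a ∧ l = b then 1 else 0)
        + (if a = b then 1 else 0))) = (n : ℂ) := by
    have inner : ∀ a : Fin n, (∑ b : Fin n, ((if (k = a ∧ l = b) ∨ (k = b ∧ l = a) then (1:ℂ) else 0)
        - (if k = a ∧ k = b then 1 else 0) - (if l = a ∧ l = b then 1 else 0)
        + (if a = b then 1 else 0)))
        = ((if k = a then (1:ℂ) else 0) + (if l = a then 1 else 0))
          - (if k = a then 1 else 0) - (if l = a then 1 else 0) + 1 := by
      intro a
      simp only [hP, Finset.sum_add_distrib, Finset.sum_sub_distrib]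
      rw [hs _ _ _, hs _ _ _, hs _ _ _, hs _ _ _, hone]
    simp only [inner]
    simp only [Finset.sum_add_distrib, Finset.sum_sub_distrib]
    simp
  rw [S1 m, S2, S3]
  ring

lemma coeff_N_e1w (c : Fin n → ℂ) (a b : Fin n) :
    coeff (N a b) ((∑ i : Fin n, (X i : MvPolynomial (Fin n) ℂ)) * (∑ j : Fin n, c j • X j))
      = c a + c b - (if a = b then c a else 0) := by
  rw [Finset.sum_mul_sum]
  have hterm : ∀ i j : Fin n, (X i : MvPolynomial (Fin n) ℂ) * (c j • X j) = c j • (X i * X j) :=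
    fun i j => (mul_smul_comm _ _ _)
  simp only [hterm, coeff_sum, coeff_smul, coeff_N_XX, smul_eq_mul, mul_ite, mul_one, mul_zero]
  have sum2 : ∀ u v : Fin n, (∑ i : Fin n, ∑ j : Fin n, if i = u ∧ j = v then c j else 0) = c v := by
    intro u v
    have h : ∀ i : Fin n, (∑ j : Fin n, if i = u ∧ j = v then c j else 0)
        = if i = u then c v else 0 := by
      intro i
      by_cases hi : i = u <;> simp [hi]
    simp [h]
  by_cases hab : a = b
  · subst hab
    simp only [or_self, sum2, eq_self_iff_true, if_true]
    ring
  · have dis : ∀ (P Q : Prop) (_ : Decidable P) (_ : Decidable Q) (x : ℂ), ¬(P ∧ Q) →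
        (if P ∨ Q then x else 0) = (if P then x else 0) + (if Q then x else 0) := by
      intro P Q _ _ x h
      by_cases hP : P <;> by_cases hQ : Q <;> simp [hP, hQ]
      exact absurd ⟨hP, hQ⟩ h
    have split : ∀ i j : Fin n,
        (if (i = a ∧ j = b) ∨ (i = b ∧ j = a) then c j else 0)
          = (if i = a ∧ j = b then c j else 0) + (if i = b ∧ j = a then c j else 0) := by
      intro i j
      refine dis _ _ _ _ _ ?_
      rintro ⟨⟨h1, h2⟩, ⟨h3, h4⟩⟩
      exact hab (h1.symm.trans h3)
    simp only [split, Finset.sum_add_distrib, sum2, if_neg hab]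
    ring

end SpanTauAux

open SpanTauAux

/-- With `Sym²V` modeled inside `MvPolynomial (Fin n) ℂ`, the span `T` of the
`τ_{kl} = v_k v_l − v_k² − v_l² + p₂` (for `k < l`) meets `e₁·V` (the image of
`w ↦ e₁·w` on the linear span `V` of the variables) in `0`. -/
theorem span_tau_inf_e1V_eq_bot (n : ℕ) (hn : 2 ≤ n)
    (e₁ p₂ : MvPolynomial (Fin n) ℂ)
    (he₁ : e₁ = ∑ i : Fin n, X i) (hp₂ : p₂ = ∑ j : Fin n, (X j) ^ 2)
    (τ : {p : Fin n × Fin n // p.1 < p.2} → MvPolynomial (Fin n) ℂ)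
    (hτ : ∀ kl, τ kl = X kl.1.1 * X kl.1.2 - (X kl.1.1) ^ 2 - (X kl.1.2) ^ 2 + p₂)
    (T : Submodule ℂ (MvPolynomial (Fin n) ℂ)) (hT : T = Submodule.span ℂ (Set.range τ))
    (V : Submodule ℂ (MvPolynomial (Fin n) ℂ))
    (hV : V = Submodule.span ℂ (Set.range (X : Fin n → MvPolynomial (Fin n) ℂ))) :
    T ⊓ Submodule.map (LinearMap.mulLeft ℂ e₁) V = ⊥ := by
  rw [eq_bot_iff]
  rintro p ⟨hpT, hpE⟩
  rw [SetLike.mem_coe, Submodule.mem_map] at hpE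
  rw [SetLike.mem_coe] at hpT
  obtain ⟨w, hwV, rfl⟩ := hpE
  rw [hV] at hwV
  obtain ⟨c, hc⟩ := (Submodule.mem_span_range_iff_exists_fun ℂ).mp hwV
  simp only [LinearMap.mulLeft_apply] at *
  set C : ℂ := ∑ i : Fin n, c i with hC
  -- Every element of T is killed by G m
  have hGp : ∀ m : Fin n, G m (e₁ * w) = 0 := by
    intro m
    have hle : T ≤ LinearMap.ker (G m) := by
      rw [hT, Submodule.span_le]
      rintro _ ⟨kl, rfl⟩
      rw [SetLike.mem_coe, LinearMap.mem_ker, hτ kl, hp₂]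
      exact G_tau m _ _ (ne_of_lt kl.2)
    exact hle hpT
  -- Value of G m on e₁ * w
  have hval : ∀ m : Fin n, G m (e₁ * w) =
      ((n : ℂ) * c m + C - c m) - 2⁻¹ * ((((n : ℂ) * C + (n : ℂ) * C - C)) - C) := by
    intro m
    rw [G_apply, he₁, ← hc]
    simp only [coeff_N_e1w]
    have A : ∀ u : Fin n, (∑ j : Fin n, (c u + c j - if u = j then c u else 0))
        = (n : ℂ) * c u + C - c u := by
      intro u
      rw [Finset.sum_sub_distrib, Finset.sum_add_distrib, Finset.sum_const, Finset.sum_ite_eq]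
      simp [Finset.card_univ, nsmul_eq_mul, hC]
    have B : (∑ k : Fin n, ∑ l : Fin n, (c k + c l - if k = l then c k else 0))
        = (n : ℂ) * C + (n : ℂ) * C - C := by
      simp only [A]
      rw [Finset.sum_sub_distrib, Finset.sum_add_distrib, ← Finset.mul_sum, Finset.sum_const]
      simp [Finset.card_univ, nsmul_eq_mul, hC]
    have D : (∑ k : Fin n, (c k + c k - if True then c k else 0)) = C := by
      simp [hC]
    rw [A m, B, D]
  -- the linear relations
  have hrel : ∀ m : Fin n, ((n : ℂ) - 1) * c m = ((n : ℂ) - 2) * C := by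
    intro m
    have h := (hval m).symm.trans (hGp m)
    linear_combination h
  -- sum them up
  have hsum : ((n : ℂ) - 1) * C = (n : ℂ) * (((n : ℂ) - 2) * C) := by
    calc ((n : ℂ) - 1) * C = ∑ m : Fin n, ((n : ℂ) - 1) * c m := by rw [Finset.mul_sum]
      _ = ∑ m : Fin n, ((n : ℂ) - 2) * C := Finset.sum_congr rfl fun m _ => hrel m
      _ = (n : ℂ) * (((n : ℂ) - 2) * C) := by
          rw [Finset.sum_const, Finset.card_univ]
          simp [nsmul_eq_mul]
  have hCzero : C = 0 := by
    by_contra hC0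
    have h2 : ((n : ℂ) - 1) = (n : ℂ) * ((n : ℂ) - 2) :=
      mul_right_cancel₀ hC0 (by linear_combination hsum)
    have hnat : (n : ℂ) ^ 2 + 1 = 3 * (n : ℂ) := by linear_combination -h2
    have hnat' : n ^ 2 + 1 = 3 * n := by exact_mod_cast hnat
    rcases Nat.lt_or_ge n 3 with h | h
    · have hn2 : n = 2 := by omega
      rw [hn2] at hnat'
      norm_num at hnat'
    · nlinarith
  have hcm : ∀ m : Fin n, c m = 0 := by
    intro m
    have h1 : ((n : ℂ) - 1) ≠ 0 := by
      rw [sub_ne_zero]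
      exact_mod_cast (by omega : n ≠ 1)
    have := hrel m
    rw [hCzero, mul_zero] at this
    exact (mul_eq_zero.mp this).resolve_left h1
  have hw : w = 0 := by
    rw [← hc]
    simp [hcm]
  simp [hw]
end

section
/- Let V = ℂⁿ with basis v₁,…,vₙ, let e₁ = Σ vᵢ, and let W = V / ℂe₁ (equivalently, the hyperplane Σ xᵢ = 0, via the projection π : V → W with π(vᵢ) = wᵢ). Define σ_{kl} = π(v_k v_l − v_k² − v_l² + p₂) ∈ Sym²W for k < l. Then the n(n−1)/2 elements σ_{kl} form a basis of Sym²W; in particular they span Sym²W. -/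
open MvPolynomial

private lemma aux_pair_inj (m : ℕ) : Function.Injective
    (fun q : {q : Fin m × Fin m // q.1 ≤ q.2} =>
      (Finsupp.single q.1.1 1 + Finsupp.single q.1.2 1 : Fin m →₀ ℕ)) := by
  rintro ⟨⟨i, j⟩, hij⟩ ⟨⟨i', j'⟩, hij'⟩ h
  simp only at h hij hij'
  by_cases hii : i = i'
  · subst hii
    have h2 : (Finsupp.single j 1 : Fin m →₀ ℕ) = Finsupp.single j' 1 := add_left_cancel h
    have h3 : j = j' := by
      by_contra hne
      have := DFunLike.congr_fun h2 j
      simp only [Finsupp.single_apply] at this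
      rw [if_neg (fun hh : j' = j => hne hh.symm)] at this
      exact one_ne_zero this
    simp [h3]
  · have h1 := DFunLike.congr_fun h i
    have h2 := DFunLike.congr_fun h i'
    simp only [Finsupp.add_apply, Finsupp.single_apply] at h1 h2
    have hji : j' = i := by
      by_contra hne
      simp [hii, fun hh : j' = i => hne hh] at h1
      split_ifs at h1 <;> omega
    have hij2 : j = i' := by
      by_contra hne
      simp [hii] at h2
      split_ifs at h2 <;> omega
    exfalso
    apply hii
    have a1 : (i : ℕ) ≤ j := hij
    have a2 : (i' : ℕ) ≤ j' := hij'
    have : (i : ℕ) = i' := by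
      have e1 : (j' : ℕ) = i := by rw [hji]
      have e2 : (j : ℕ) = i' := by rw [hij2]
      omega
    exact Fin.ext this

private lemma aux_B_indep (m : ℕ) : LinearIndependent ℂ
    (fun q : {q : Fin m × Fin m // q.1 ≤ q.2} =>
      (X q.1.1 * X q.1.2 : MvPolynomial (Fin m) ℂ)) := by
  have h1 := ((MvPolynomial.basisMonomials (Fin m) ℂ).linearIndependent).comp _ (aux_pair_inj m)
  convert h1 using 1
  funext q
  simp only [Function.comp_apply, coe_basisMonomials]
  rw [X, X, monomial_mul, one_mul]
  all_goals rfl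

private def aux_equiv (m : ℕ) : {q : Fin m × Fin m // q.1 ≤ q.2} ≃
    {p : Fin (m + 1) × Fin (m + 1) // p.1 < p.2} where
  toFun q := ⟨(q.1.1.castSucc, q.1.2.succ), by
    have h : (q.1.1 : ℕ) ≤ q.1.2 := q.2
    show (q.1.1 : ℕ) < (q.1.2 : ℕ) + 1
    omega⟩
  invFun p := ⟨(⟨p.1.1, by
      have h : (p.1.1 : ℕ) < p.1.2 := p.2
      have h2 := p.1.2.isLt
      omega⟩, ⟨(p.1.2 : ℕ) - 1, by
      have h2 := p.1.2.isLt
      omega⟩), by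
    have h : (p.1.1 : ℕ) < p.1.2 := p.2
    show (p.1.1 : ℕ) ≤ (p.1.2 : ℕ) - 1
    omega⟩
  left_inv q := by
    apply Subtype.ext
    apply Prod.ext <;> apply Fin.ext <;> simp [Fin.succ]
  right_inv p := by
    have h : (p.1.1 : ℕ) < p.1.2 := p.2
    apply Subtype.ext
    apply Prod.ext <;> apply Fin.ext <;> simp [Fin.succ] <;> omega

/-- Let `W = V/ℂe₁`, realized concretely with coordinates `Fin (n-1)` via the
projection `π(vᵢ) = wᵢ`, where `wᵢ = Xᵢ` for `i < n-1` and `w_{n-1} = -(X₀ + ⋯ + X_{n-2})`.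
`Sym²W` is modeled as the span of the quadratic monomials in `MvPolynomial (Fin (n-1)) ℂ`.
The `n(n-1)/2` elements `σ_{kl} = π(v_k v_l − v_k² − v_l² + p₂)` (for `k < l`) form a basis of
`Sym²W`: they are linearly independent and they span `Sym²W`. -/
theorem sigma_basis_of_sym2_quotient (n : ℕ) (hn : 2 ≤ n)
    (w : Fin n → MvPolynomial (Fin (n - 1)) ℂ)
    (hw : ∀ i : Fin n, w i = if h : (i : ℕ) < n - 1 then X (⟨i, h⟩ : Fin (n - 1))
      else -(∑ j : Fin (n - 1), X j))
    (σ : {p : Fin n × Fin n // p.1 < p.2} → MvPolynomial (Fin (n - 1)) ℂ)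
    (hσ : ∀ kl, σ kl =
      w kl.1.1 * w kl.1.2 - (w kl.1.1) ^ 2 - (w kl.1.2) ^ 2 + ∑ j : Fin n, (w j) ^ 2)
    (Sym2W : Submodule ℂ (MvPolynomial (Fin (n - 1)) ℂ))
    (hS : Sym2W = Submodule.span ℂ {q | ∃ i j : Fin (n - 1), q = X i * X j}) :
    LinearIndependent ℂ σ ∧ Submodule.span ℂ (Set.range σ) = Sym2W := by
  obtain ⟨m, rfl⟩ : ∃ m, n = m + 1 := ⟨n - 1, by omega⟩
  have hm1 : 1 ≤ m := by omega
  -- basic facts about w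
  have hwc : ∀ i : Fin m, w i.castSucc = X i := by
    intro i
    rw [hw]
    simp only [Nat.add_sub_cancel]
    rw [dif_pos (show ((i.castSucc : Fin (m+1)) : ℕ) < m from i.isLt)]
    congr 1
  have hwl : w (Fin.last m) = -(∑ j : Fin m, X j) := by
    rw [hw, dif_neg (by simp)]
    rfl
  have hsum0 : ∑ i : Fin (m+1), w i = 0 := by
    rw [Fin.sum_univ_castSucc]
    simp [hwc, hwl]
  -- products of w's lie in Sym2W
  have hgen : ∀ a b : Fin m, (X a * X b : MvPolynomial (Fin m) ℂ) ∈ Sym2W := by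
    intro a b; rw [hS]; exact Submodule.subset_span ⟨a, b, rfl⟩
  have hprod : ∀ a b : Fin (m+1), w a * w b ∈ Sym2W := by
    intro a b
    rw [hw a, hw b]
    split_ifs with h1 h2 h3
    · exact hgen _ _
    · rw [mul_neg, Finset.mul_sum]
      exact neg_mem (Submodule.sum_mem _ fun j _ => hgen _ _)
    · rw [neg_mul, Finset.sum_mul]
      exact neg_mem (Submodule.sum_mem _ fun j _ => hgen _ _)
    · rw [neg_mul_neg, Finset.sum_mul]
      refine Submodule.sum_mem _ fun j _ => ?_
      rw [Finset.mul_sum]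
      exact Submodule.sum_mem _ fun k _ => hgen _ _
  set S := ∑ j : Fin (m+1), (w j) ^ 2 with hSdef
  have hSmem : S ∈ Sym2W := Submodule.sum_mem _ fun j _ => by rw [sq]; exact hprod j j
  have hσmem : ∀ kl, σ kl ∈ Sym2W := by
    intro kl; rw [hσ]
    refine add_mem (sub_mem (sub_mem (hprod _ _) ?_) ?_) hSmem <;>
      · rw [sq]; exact hprod _ _
  -- membership in span of σ
  have hτ : ∀ a b : Fin (m+1), a ≠ b →
      w a * w b - (w a) ^ 2 - (w b) ^ 2 + S ∈ Submodule.span ℂ (Set.range σ) := by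
    intro a b hab
    rcases lt_or_gt_of_ne hab with h | h
    · have he : w a * w b - (w a) ^ 2 - (w b) ^ 2 + S = σ ⟨(a, b), h⟩ := by rw [hσ]
      rw [he]; exact Submodule.subset_span ⟨_, rfl⟩
    · have he : w a * w b - (w a) ^ 2 - (w b) ^ 2 + S = σ ⟨(b, a), h⟩ := by rw [hσ]; ring
      rw [he]; exact Submodule.subset_span ⟨_, rfl⟩
  have hinner : ∀ a : Fin (m+1),
      ∑ b ∈ Finset.univ.erase a, (w a * w b - (w a) ^ 2 - (w b) ^ 2 + S)
        = ((m : ℂ) - 1) • S - (m : ℂ) • (w a) ^ 2 := by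
    intro a
    have e1 : ∑ b ∈ Finset.univ.erase a, w b = -(w a) := by
      rw [Finset.sum_erase_eq_sub (Finset.mem_univ a), hsum0]; ring
    have e2 : ∑ b ∈ Finset.univ.erase a, (w b) ^ 2 = S - (w a) ^ 2 := by
      rw [Finset.sum_erase_eq_sub (Finset.mem_univ a), hSdef]
    have e3 : (Finset.univ.erase a).card = m := by
      rw [Finset.card_erase_of_mem (Finset.mem_univ a)]; simp
    rw [Finset.sum_add_distrib, Finset.sum_sub_distrib, Finset.sum_sub_distrib,
      ← Finset.mul_sum, e1, e2, Finset.sum_const, Finset.sum_const, e3]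
    simp only [MvPolynomial.smul_eq_C_mul, nsmul_eq_mul, map_sub, map_one, map_natCast]
    push_cast
    ring
  have hRa : ∀ a : Fin (m+1),
      ((m : ℂ) - 1) • S - (m : ℂ) • (w a) ^ 2 ∈ Submodule.span ℂ (Set.range σ) := by
    intro a
    rw [← hinner a]
    exact Submodule.sum_mem _ fun b hb => hτ a b (Finset.ne_of_mem_erase hb).symm
  have hT : ∑ a : Fin (m+1), (((m : ℂ) - 1) • S - (m : ℂ) • (w a) ^ 2)
      = ((m : ℂ) ^ 2 - m - 1) • S := by
    rw [Finset.sum_sub_distrib, Finset.sum_const, Finset.card_univ, Fintype.card_fin,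
      ← Finset.smul_sum, ← hSdef]
    simp only [MvPolynomial.smul_eq_C_mul, nsmul_eq_mul, map_sub, map_one, map_natCast, map_pow]
    push_cast
    ring
  have hc : ((m : ℂ) ^ 2 - m - 1) ≠ 0 := by
    intro h
    have h' : ((m : ℤ) ^ 2 - m - 1) = 0 := by exact_mod_cast h
    have hz : (1 : ℤ) ≤ (m : ℤ) := by exact_mod_cast hm1
    rcases eq_or_lt_of_le hz with h1 | h1
    · rw [← h1] at h'; norm_num at h'
    · nlinarith [h', h1]
  have hSP : S ∈ Submodule.span ℂ (Set.range σ) := by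
    have hmem : ((m : ℂ) ^ 2 - m - 1) • S ∈ Submodule.span ℂ (Set.range σ) := by
      rw [← hT]; exact Submodule.sum_mem _ fun a _ => hRa a
    rwa [Submodule.smul_mem_iff _ hc] at hmem
  have hsq : ∀ a : Fin (m+1), (w a) ^ 2 ∈ Submodule.span ℂ (Set.range σ) := by
    intro a
    have h1 := sub_mem (Submodule.smul_mem _ ((m : ℂ) - 1) hSP) (hRa a)
    rw [sub_sub_cancel] at h1
    rwa [Submodule.smul_mem_iff _ (show (m : ℂ) ≠ 0 from Nat.cast_ne_zero.mpr (by omega))] at h1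
  have hwab : ∀ a b : Fin (m+1), w a * w b ∈ Submodule.span ℂ (Set.range σ) := by
    intro a b
    rcases eq_or_ne a b with rfl | hab
    · rw [← sq]; exact hsq a
    · have he : w a * w b
          = (w a * w b - (w a) ^ 2 - (w b) ^ 2 + S) + (w a) ^ 2 + (w b) ^ 2 - S := by ring
      rw [he]
      exact sub_mem (add_mem (add_mem (hτ a b hab) (hsq a)) (hsq b)) hSP
  have hspan : Submodule.span ℂ (Set.range σ) = Sym2W := by
    apply le_antisymm
    · rw [Submodule.span_le]; rintro _ ⟨kl, rfl⟩; exact hσmem kl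
    · rw [hS, Submodule.span_le]
      rintro _ ⟨i, j, rfl⟩
      rw [← hwc i, ← hwc j]
      exact hwab _ _
  refine ⟨?_, hspan⟩
  -- linear independence via dimension count
  have hBspan : Submodule.span ℂ (Set.range
      (fun q : {q : Fin m × Fin m // q.1 ≤ q.2} =>
        (X q.1.1 * X q.1.2 : MvPolynomial (Fin m) ℂ))) = Sym2W := by
    apply le_antisymm
    · rw [Submodule.span_le]; rintro _ ⟨q, rfl⟩; exact hgen _ _
    · rw [hS, Submodule.span_le]
      rintro _ ⟨i, j, rfl⟩
      rcases le_total i j with h | h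
      · exact Submodule.subset_span ⟨⟨(i, j), h⟩, rfl⟩
      · rw [mul_comm]
        exact Submodule.subset_span ⟨⟨(j, i), h⟩, rfl⟩
  have hfr : Module.finrank ℂ Sym2W = Fintype.card {q : Fin m × Fin m // q.1 ≤ q.2} := by
    rw [← hBspan]; exact finrank_span_eq_card (aux_B_indep m)
  rw [linearIndependent_iff_card_eq_finrank_span]
  unfold Set.finrank
  rw [hspan, hfr]
  exact Fintype.card_congr (aux_equiv m).symm
end

section
/- Let n ≥ 2 and let w₁,…,wₙ be vectors in ℂⁿ⁻¹ in general position (any n−1 of them are linearly independent), with w₁ + ⋯ + wₙ = 0. For each pair k < l set σ_{kl} = w_k w_l + Σ_{j ≠ k,l} wⱼ² ∈ Sym²(ℂⁿ⁻¹) (symmetric product). Then the σ_{kl} span Sym²(ℂⁿ⁻¹). -/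
open MvPolynomial Finset

-- auxiliary lemma: the integer n^2 - 3n + 1 is never zero
lemma aux_ne (n : ℕ) : ((n:ℂ)^2 - 3*n + 1) ≠ 0 := by
  have h : ((n:ℤ)^2 - 3*n + 1) ≠ 0 := by
    rcases le_or_gt n 3 with h | h
    · interval_cases n <;> decide
    · have : (4:ℤ) ≤ (n:ℤ) := by exact_mod_cast h
      nlinarith
  intro hc
  apply h
  have : (((n:ℤ)^2 - 3*n + 1 : ℤ) : ℂ) = 0 := by push_cast; push_cast at hc; linear_combination hc
  exact_mod_cast this


/-- Let `w₁,…,wₙ ∈ ℂⁿ⁻¹` be in general position (any `n-1` of them linearly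
independent) with `Σ wᵢ = 0`. Model `Sym²(ℂⁿ⁻¹)` as the span of quadratic monomials in
`MvPolynomial (Fin (n-1)) ℂ`, a vector `u` corresponding to the linear form
`ℓ(u) = Σᵢ uᵢ • Xᵢ` and the symmetric product to multiplication of linear forms.
Then the elements `σ_{kl} = w_k w_l + Σ_{j≠k,l} wⱼ²` (for `k < l`) span `Sym²(ℂⁿ⁻¹)`. -/
theorem sigma_span_sym2 (n : ℕ) (hn : 2 ≤ n)
    (w : Fin n → (Fin (n - 1) → ℂ))
    (hgen : ∀ i : Fin n, LinearIndependent ℂ (fun j : {j : Fin n // j ≠ i} => w j))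
    (hsum : ∑ i : Fin n, w i = 0)
    (ℓ : (Fin (n - 1) → ℂ) → MvPolynomial (Fin (n - 1)) ℂ)
    (hℓ : ∀ u, ℓ u = ∑ i : Fin (n - 1), u i • X i)
    (σ : {p : Fin n × Fin n // p.1 < p.2} → MvPolynomial (Fin (n - 1)) ℂ)
    (hσ : ∀ kl, σ kl = ℓ (w kl.1.1) * ℓ (w kl.1.2)
      + ∑ j ∈ Finset.univ.filter (fun j => j ≠ kl.1.1 ∧ j ≠ kl.1.2), (ℓ (w j)) ^ 2) :
    Submodule.span ℂ (Set.range σ)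
      = Submodule.span ℂ {q | ∃ i j : Fin (n - 1), q = X i * X j} := by
  classical
  set V := Submodule.span ℂ (Set.range σ) with hV
  set W := Submodule.span ℂ {q : MvPolynomial (Fin (n-1)) ℂ | ∃ i j : Fin (n - 1), q = X i * X j} with hW
  -- the linear map u ↦ Σ uᵢ • Xᵢ
  let L : (Fin (n-1) → ℂ) →ₗ[ℂ] MvPolynomial (Fin (n-1)) ℂ :=
    { toFun := fun u => ∑ i : Fin (n-1), u i • X i
      map_add' := by intro u v; simp [add_smul, Finset.sum_add_distrib]
      map_smul' := by intro c u; simp [smul_smul, Finset.smul_sum]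
    }
  have hℓL : ∀ u, ℓ u = L u := fun u => hℓ u
  set a : Fin n → MvPolynomial (Fin (n-1)) ℂ := fun k => L (w k) with ha
  set S : MvPolynomial (Fin (n-1)) ℂ := ∑ j : Fin n, a j ^ 2 with hS
  have hsuma : ∑ j : Fin n, a j = 0 := by
    rw [← map_sum, hsum, map_zero]
  -- products of linear forms lie in W
  have hprodW : ∀ u v, L u * L v ∈ W := by
    intro u v
    show (∑ i : Fin (n-1), u i • X i) * (∑ j : Fin (n-1), v j • X j) ∈ W
    rw [Finset.sum_mul_sum]
    refine Submodule.sum_mem _ fun i _ => Submodule.sum_mem _ fun j _ => ?_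
    have : (u i • X i) * (v j • X j) = (u i * v j) • ((X i : MvPolynomial (Fin (n-1)) ℂ) * X j) := by
      rw [smul_mul_smul_comm]
    rw [this]
    exact Submodule.smul_mem _ _ (Submodule.subset_span ⟨i, j, rfl⟩)
  -- easy direction: each σ lies in W
  have hσW : ∀ kl, σ kl ∈ W := by
    intro kl
    rw [hσ kl, hℓL, hℓL]
    refine Submodule.add_mem _ (hprodW _ _) (Submodule.sum_mem _ fun j _ => ?_)
    rw [hℓL, sq]
    exact hprodW _ _
  -- the symmetric elements t k l are in V
  have ht : ∀ k l : Fin n, k ≠ l → a k * a l + (S - a k ^ 2 - a l ^ 2) ∈ V := by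
    intro k l hkl
    have hfil : ∀ (p q : Fin n), p ≠ q →
        ∑ j ∈ Finset.univ.filter (fun j => j ≠ p ∧ j ≠ q), (L (w j)) ^ 2
          = S - a p ^ 2 - a q ^ 2 := by
      intro p q hpq
      have hset : Finset.univ.filter (fun j => j ≠ p ∧ j ≠ q)
          = (Finset.univ.erase p).erase q := by
        ext j; simp [Finset.mem_erase, and_comm]
      rw [hset]
      rw [Finset.sum_erase_eq_sub (Finset.mem_erase.2 ⟨hpq.symm, Finset.mem_univ q⟩),
        Finset.sum_erase_eq_sub (Finset.mem_univ p)]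
    rcases lt_or_gt_of_ne hkl with h | h
    · have hmem : σ ⟨(k, l), h⟩ ∈ V := Submodule.subset_span ⟨_, rfl⟩
      rw [hσ] at hmem
      simp only [hℓL] at hmem
      rw [hfil k l hkl] at hmem
      exact hmem
    · have hmem : σ ⟨(l, k), h⟩ ∈ V := Submodule.subset_span ⟨_, rfl⟩
      rw [hσ] at hmem
      simp only [hℓL] at hmem
      rw [hfil l k hkl.symm] at hmem
      have : a k * a l + (S - a k ^ 2 - a l ^ 2)
          = L (w l) * L (w k) + (S - a l ^ 2 - a k ^ 2) := by ring
      rw [this]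
      exact hmem
  -- the elements u_k
  have hu : ∀ k : Fin n, (-((n:ℂ)-1)) • a k ^ 2 + ((n:ℂ)-2) • S ∈ V := by
    intro k
    have hmem : ∑ l ∈ Finset.univ.erase k, (a k * a l + (S - a k ^ 2 - a l ^ 2)) ∈ V :=
      Submodule.sum_mem _ fun l hl => ht k l (Finset.ne_of_mem_erase hl).symm
    have h1 : ∑ l ∈ Finset.univ.erase k, a l = -a k := by
      rw [Finset.sum_erase_eq_sub (Finset.mem_univ k), hsuma]; ring
    have h2 : ∑ l ∈ Finset.univ.erase k, a l ^ 2 = S - a k ^ 2 := by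
      rw [Finset.sum_erase_eq_sub (Finset.mem_univ k)]
    have hcard : (Finset.univ.erase k).card = n - 1 := by
      rw [Finset.card_erase_of_mem (Finset.mem_univ k), Finset.card_univ, Fintype.card_fin]
    have heq : ∑ l ∈ Finset.univ.erase k, (a k * a l + (S - a k ^ 2 - a l ^ 2))
        = (-((n:ℂ)-1)) • a k ^ 2 + ((n:ℂ)-2) • S := by
      rw [Finset.sum_add_distrib, ← Finset.mul_sum, h1]
      have h3 : ∑ l ∈ Finset.univ.erase k, (S - a k ^ 2 - a l ^ 2)
          = (n - 1 : ℕ) • (S - a k ^ 2) - (S - a k ^ 2) := by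
        rw [Finset.sum_sub_distrib, Finset.sum_const, hcard, h2]
      rw [h3]
      have hn1 : ((n - 1 : ℕ) : ℂ) = (n : ℂ) - 1 := by
        push_cast [Nat.cast_sub (by omega : 1 ≤ n)]; ring
      rw [← Nat.cast_smul_eq_nsmul ℂ, hn1]
      simp only [MvPolynomial.smul_eq_C_mul, map_sub, map_neg, map_one, map_ofNat]
      ring
    rw [← heq]; exact hmem
  -- S itself lies in V
  have hSV : S ∈ V := by
    have hmem := Submodule.sum_mem V (fun k (_ : k ∈ Finset.univ) => hu k)
    have hsumEq : ∑ k : Fin n, ((-((n:ℂ)-1)) • a k ^ 2 + ((n:ℂ)-2) • S)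
        = ((n:ℂ)^2 - 3*n + 1) • S := by
      rw [Finset.sum_add_distrib, ← Finset.smul_sum, ← hS, Finset.sum_const,
        Finset.card_univ, Fintype.card_fin, ← Nat.cast_smul_eq_nsmul ℂ, smul_smul, ← add_smul]
      congr 1
      ring
    rw [hsumEq] at hmem
    have h2 := Submodule.smul_mem V ((n:ℂ)^2 - 3*n + 1)⁻¹ hmem
    rwa [inv_smul_smul₀ (aux_ne n)] at h2
  have hn1ne : ((n:ℂ) - 1) ≠ 0 := by
    have : (n:ℂ) ≠ 1 := by
      intro h
      have : n = 1 := by exact_mod_cast h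
      omega
    exact sub_ne_zero.2 this
  have hsq : ∀ k : Fin n, a k ^ 2 ∈ V := by
    intro k
    have h1 : (-((n:ℂ)-1)) • a k ^ 2 ∈ V := by
      have h2 := Submodule.sub_mem V (hu k) (Submodule.smul_mem V ((n:ℂ)-2) hSV)
      simpa using h2
    have h3 := Submodule.smul_mem V (-((n:ℂ)-1))⁻¹ h1
    rwa [inv_smul_smul₀ (neg_ne_zero.2 hn1ne)] at h3
  have hkey : ∀ k l : Fin n, a k * a l ∈ V := by
    intro k l
    by_cases hkl : k = l
    · subst hkl
      have := hsq k
      rwa [sq] at this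
    · have h := ht k l hkl
      have hE : a k * a l = (a k * a l + (S - a k ^ 2 - a l ^ 2)) - S + a k ^ 2 + a l ^ 2 := by
        ring
      rw [hE]
      exact Submodule.add_mem _ (Submodule.add_mem _ (Submodule.sub_mem _ h hSV) (hsq k)) (hsq l)
  -- the vectors w j, j ≠ i₀, form a basis
  set i₀ : Fin n := ⟨n-1, by omega⟩ with hi₀
  have hcard : Fintype.card {j : Fin n // j ≠ i₀} = Module.finrank ℂ (Fin (n-1) → ℂ) := by
    simp [Fintype.card_subtype_compl, Fintype.card_subtype_eq]
  have hne : Nonempty {j : Fin n // j ≠ i₀} :=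
    ⟨⟨⟨0, by omega⟩, fun h => by rw [hi₀, Fin.ext_iff] at h; simp at h; omega⟩⟩
  have hspan : Submodule.span ℂ (Set.range fun j : {j : Fin n // j ≠ i₀} => w j) = ⊤ := by
    have hB := (basisOfLinearIndependentOfCardEqFinrank (hgen i₀) hcard).span_eq
    rwa [coe_basisOfLinearIndependentOfCardEqFinrank] at hB
  have h1 : ∀ (k : Fin n) (v : Fin (n-1) → ℂ), L (w k) * L v ∈ V := by
    intro k v
    have hv : v ∈ Submodule.span ℂ (Set.range fun j : {j : Fin n // j ≠ i₀} => w j) := by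
      rw [hspan]; trivial
    refine Submodule.span_induction ?_ ?_ ?_ ?_ hv
    · rintro _ ⟨j, rfl⟩; exact hkey k j
    · rw [map_zero, mul_zero]; exact Submodule.zero_mem V
    · intro x y _ _ hx hy
      rw [map_add, mul_add]; exact Submodule.add_mem V hx hy
    · intro c x _ hx
      rw [map_smul, mul_smul_comm]; exact Submodule.smul_mem V c hx
  have h2 : ∀ (u v : Fin (n-1) → ℂ), L u * L v ∈ V := by
    intro u v
    have hu' : u ∈ Submodule.span ℂ (Set.range fun j : {j : Fin n // j ≠ i₀} => w j) := by
      rw [hspan]; trivial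
    refine Submodule.span_induction ?_ ?_ ?_ ?_ hu'
    · rintro _ ⟨j, rfl⟩; exact h1 j v
    · rw [map_zero, zero_mul]; exact Submodule.zero_mem V
    · intro x y _ _ hx hy
      rw [map_add, add_mul]; exact Submodule.add_mem V hx hy
    · intro c x _ hx
      rw [map_smul, smul_mul_assoc]; exact Submodule.smul_mem V c hx
  have hX : ∀ i : Fin (n-1), L (Pi.single i 1) = X i := by
    intro i
    show ∑ t : Fin (n-1), Pi.single i 1 t • X t = X i
    simp [Pi.single_apply, ite_smul, Finset.sum_ite_eq']
  apply le_antisymm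
  · rw [hV, Submodule.span_le]
    rintro _ ⟨kl, rfl⟩
    exact hσW kl
  · rw [hW, Submodule.span_le]
    rintro q ⟨i, j, rfl⟩
    show X i * X j ∈ V
    rw [← hX i, ← hX j]
    exact h2 _ _
end

section
/- Let W be an (n−1)-dimensional complex vector space and w₁,…,wₙ ∈ W vectors such that every (n−1)-element subset of {w₁,…,wₙ} is a basis of W. If a linear functional on Sym²W vanishes on all elements σ_{kl} = w_k w_l + Σ_{j≠k,l} wⱼ² (k < l) and additionally Σwᵢ = 0, then the functional is zero. -/
open MvPolynomial

/-- dual spanning lemma: Let `W = ℂⁿ⁻¹` and `w₁,…,wₙ ∈ W` with `Σ wᵢ = 0` and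
every `(n−1)`-element subset a basis (in particular linearly independent). Model `Sym²W` as
the span of quadratic monomials in `MvPolynomial (Fin (n-1)) ℂ`, with a vector `u`
corresponding to the linear form `ℓ(u) = Σ uᵢ • Xᵢ`. If a linear functional vanishes on all
`σ_{kl} = w_k w_l + Σ_{j≠k,l} wⱼ²` (for `k < l`), then it vanishes on all of `Sym²W`. -/
theorem dual_spanning (n : ℕ) (hn : 2 ≤ n)
    (w : Fin n → (Fin (n - 1) → ℂ))
    (hgen : ∀ i : Fin n, LinearIndependent ℂ (fun j : {j : Fin n // j ≠ i} => w j))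
    (hsum : ∑ i : Fin n, w i = 0)
    (ℓ : (Fin (n - 1) → ℂ) → MvPolynomial (Fin (n - 1)) ℂ)
    (hℓ : ∀ u, ℓ u = ∑ i : Fin (n - 1), u i • X i)
    (σ : {p : Fin n × Fin n // p.1 < p.2} → MvPolynomial (Fin (n - 1)) ℂ)
    (hσ : ∀ kl, σ kl = ℓ (w kl.1.1) * ℓ (w kl.1.2)
      + ∑ j ∈ Finset.univ.filter (fun j => j ≠ kl.1.1 ∧ j ≠ kl.1.2), (ℓ (w j)) ^ 2)
    (f : MvPolynomial (Fin (n - 1)) ℂ →ₗ[ℂ] ℂ)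
    (hf : ∀ kl, f (σ kl) = 0) :
    ∀ q ∈ Submodule.span ℂ {q | ∃ i j : Fin (n - 1), q = X i * X j}, f q = 0 := by
  classical
  set L : Fin n → MvPolynomial (Fin (n - 1)) ℂ := fun k => ℓ (w k) with hLdef
  set a : Fin n → Fin n → ℂ := fun k l => f (L k * L l) with hadef
  set S : ℂ := ∑ k, a k k with hSdef
  -- the sum of the linear forms is zero
  have hLsum : ∑ k, L k = 0 := by
    simp only [hLdef, hℓ]
    rw [Finset.sum_comm]
    have h : ∀ i : Fin (n-1),
        ∑ k : Fin n, w k i • (X i : MvPolynomial (Fin (n-1)) ℂ) = 0 := by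
      intro i
      rw [← Finset.sum_smul]
      have h0 : ∑ k : Fin n, w k i = 0 := by
        have := congrFun hsum i
        simpa using this
      rw [h0, zero_smul]
    simp [h]
  -- the key relation coming from hf, for k < l
  have key0 : ∀ k l : Fin n, k < l → a k l + (S - a k k - a l l) = 0 := by
    intro k l hkl
    have hne : k ≠ l := ne_of_lt hkl
    have h1 := hf ⟨(k, l), hkl⟩
    rw [hσ] at h1
    simp only [map_add, map_sum] at h1
    have hfilter : Finset.univ.filter (fun j : Fin n => j ≠ k ∧ j ≠ l)
        = Finset.univ \ ({k, l} : Finset (Fin n)) := by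
      ext j
      simp [not_or]
    have hsub : ({k, l} : Finset (Fin n)) ⊆ Finset.univ := Finset.subset_univ _
    have hsd : ∑ j ∈ Finset.univ \ ({k, l} : Finset (Fin n)), f ((L j)^2)
        = S - (a k k + a l l) := by
      have h2 := Finset.sum_sdiff (f := fun j : Fin n => f ((L j)^2)) hsub
      have h3 : ∑ j ∈ ({k, l} : Finset (Fin n)), f ((L j)^2) = a k k + a l l := by
        rw [Finset.sum_pair hne]
        simp [hadef, sq]
      have h4 : ∑ j : Fin n, f ((L j)^2) = S := by
        simp [hSdef, hadef, sq]
      rw [← h4, ← h2, h3]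
      ring
    rw [hfilter, hsd] at h1
    show f (L k * L l) + (S - a k k - a l l) = 0
    linear_combination h1
  -- symmetry of a
  have hasymm : ∀ k l : Fin n, a k l = a l k := by
    intro k l
    simp [hadef, mul_comm]
  -- key for all k ≠ l
  have key : ∀ k l : Fin n, k ≠ l → a k l = a k k + a l l - S := by
    intro k l hne
    rcases lt_or_gt_of_ne hne with h | h
    · have h2 := key0 k l h; linear_combination h2
    · have h2 := key0 l k h; rw [hasymm]; linear_combination h2
  -- row sums vanish
  have hrow : ∀ k : Fin n, ∑ l, a k l = 0 := by
    intro k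
    have : ∑ l, a k l = f (L k * ∑ l, L l) := by
      rw [Finset.mul_sum, map_sum]
    rw [this, hLsum, mul_zero, map_zero]
  have hcast1 : ((n : ℂ) - 1) ≠ 0 := by
    have hne : (n : ℂ) ≠ (1 : ℕ) := by
      exact_mod_cast (by omega : n ≠ 1)
    simpa using sub_ne_zero.mpr hne
  -- derive (n-1) * s k = (n-2) * S
  have hsk : ∀ k : Fin n, ((n : ℂ) - 1) * a k k = ((n : ℂ) - 2) * S := by
    intro k
    have hsplit : ∑ l, a k l = a k k + ∑ l ∈ Finset.univ \ {k}, a k l := by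
      rw [← Finset.sum_sdiff (Finset.subset_univ {k})]
      simp [add_comm]
    have hrest : ∑ l ∈ Finset.univ \ {k}, a k l
        = ∑ l ∈ Finset.univ \ {k}, (a k k + a l l - S) := by
      apply Finset.sum_congr rfl
      intro l hl
      simp only [Finset.mem_sdiff, Finset.mem_singleton] at hl
      exact key k l (Ne.symm hl.2)
    have hcard : (Finset.univ \ ({k} : Finset (Fin n))).card = n - 1 := by
      rw [Finset.card_sdiff_of_subset (Finset.subset_univ _)]
      simp
    have hsumll : ∑ l ∈ Finset.univ \ ({k} : Finset (Fin n)), a l l = S - a k k := by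
      have h5 := Finset.sum_sdiff (f := fun l : Fin n => a l l) (Finset.subset_univ {k})
      simp only [Finset.sum_singleton] at h5
      rw [← hSdef] at h5
      linear_combination h5
    have hc : ((n - 1 : ℕ) : ℂ) = (n : ℂ) - 1 := by
      rw [Nat.cast_sub (by omega : 1 ≤ n)]; norm_num
    have hval : ∑ l ∈ Finset.univ \ {k}, (a k k + a l l - S)
        = ((n:ℂ) - 1) * a k k + (S - a k k) - ((n:ℂ) - 1) * S := by
      rw [Finset.sum_sub_distrib, Finset.sum_add_distrib, hsumll,
        Finset.sum_const, Finset.sum_const, hcard]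
      simp [nsmul_eq_mul, hc]
    have h0 := hrow k
    rw [hsplit, hrest, hval] at h0
    linear_combination h0
  -- sum over k gives (n^2 - 3n + 1) S = 0
  have hS0 : S = 0 := by
    have hsum2 : ∑ k : Fin n, ((n : ℂ) - 1) * a k k = ∑ k : Fin n, ((n : ℂ) - 2) * S :=
      Finset.sum_congr rfl fun k _ => hsk k
    rw [← Finset.mul_sum, ← hSdef, Finset.sum_const, Finset.card_univ, Fintype.card_fin,
      nsmul_eq_mul] at hsum2
    have hnz : ((n:ℂ)^2 - 3*(n:ℂ) + 1) ≠ 0 := by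
      intro h
      have h3 : ((n^2 + 1 : ℕ) : ℂ) = ((3*n : ℕ) : ℂ) := by
        push_cast
        linear_combination h
      have h4 : n^2 + 1 = 3*n := Nat.cast_injective h3
      rcases (by omega : n = 2 ∨ 3 ≤ n) with h5 | h5
      · subst h5; omega
      · nlinarith
    have hz : ((n:ℂ)^2 - 3*(n:ℂ) + 1) * S = 0 := by linear_combination -hsum2
    exact (mul_eq_zero.mp hz).resolve_left hnz
  have hskk : ∀ k : Fin n, a k k = 0 := by
    intro k
    have h6 := hsk k
    rw [hS0, mul_zero] at h6
    exact (mul_eq_zero.mp h6).resolve_left hcast1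
  have hall : ∀ k l : Fin n, a k l = 0 := by
    intro k l
    by_cases h : k = l
    · subst h; exact hskk k
    · rw [key k l h, hskk k, hskk l, hS0]; ring
  -- now use that w's excluding index 0 form a basis
  have hn1 : 0 < n := by omega
  set i0 : Fin n := ⟨0, hn1⟩ with hi0
  have hnonempty : Nonempty {j : Fin n // j ≠ i0} :=
    ⟨⟨⟨1, by omega⟩, by simp [hi0, Fin.ext_iff]⟩⟩
  have hcard : Fintype.card {j : Fin n // j ≠ i0} = n - 1 := by
    simp [Fintype.card_subtype_compl]
  have hspan : Submodule.span ℂ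
      (Set.range fun j : {j : Fin n // j ≠ i0} => w (j : Fin n)) = ⊤ := by
    apply (hgen i0).span_eq_top_of_card_eq_finrank
    rw [hcard, Module.finrank_fintype_fun_eq_card, Fintype.card_fin]
  have hmem : ∀ i : Fin (n-1), ∃ c : {j : Fin n // j ≠ i0} → ℂ,
      ∑ j, c j • w (j : Fin n) = Pi.single i 1 := by
    intro i
    have hm : (Pi.single i (1:ℂ)) ∈ Submodule.span ℂ
        (Set.range fun j : {j : Fin n // j ≠ i0} => w (j : Fin n)) := by
      rw [hspan]; trivial
    exact (Submodule.mem_span_range_iff_exists_fun ℂ).mp hm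
  choose c hc using hmem
  -- ℓ of a linear combination
  have hlin : ∀ (d : {j : Fin n // j ≠ i0} → ℂ),
      ℓ (∑ j, d j • w (j : Fin n)) = ∑ j, d j • L (j : Fin n) := by
    intro d
    rw [hℓ]
    calc ∑ t, (∑ j, d j • w (j:Fin n)) t • (X t : MvPolynomial (Fin (n-1)) ℂ)
        = ∑ t, ∑ j, (d j * w (j:Fin n) t) • (X t : MvPolynomial (Fin (n-1)) ℂ) := by
          refine Finset.sum_congr rfl fun t _ => ?_
          rw [Finset.sum_apply, Finset.sum_smul]
          simp [smul_smul]
      _ = ∑ j, ∑ t, (d j * w (j:Fin n) t) • (X t : MvPolynomial (Fin (n-1)) ℂ) :=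
          Finset.sum_comm
      _ = ∑ j, d j • L (j:Fin n) := by
          refine Finset.sum_congr rfl fun j _ => ?_
          simp only [hLdef, hℓ, Finset.smul_sum, mul_smul]
  have hX : ∀ i : Fin (n-1), (X i : MvPolynomial (Fin (n-1)) ℂ)
      = ∑ j, c i j • L (j : Fin n) := by
    intro i
    rw [← hlin (c i), hc i, hℓ]
    simp [Pi.single_apply]
  -- f vanishes on each generator
  have hgen0 : ∀ q ∈ {q : MvPolynomial (Fin (n-1)) ℂ | ∃ i j, q = X i * X j}, f q = 0 := by
    rintro q ⟨i, j, rfl⟩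
    rw [hX i, hX j, Finset.sum_mul_sum, map_sum]
    refine Finset.sum_eq_zero fun p _ => ?_
    rw [map_sum]
    refine Finset.sum_eq_zero fun r _ => ?_
    rw [smul_mul_assoc, mul_smul_comm, map_smul, map_smul]
    have : f (L (p : Fin n) * L (r : Fin n)) = 0 := hall _ _
    rw [this, smul_zero, smul_zero]
  intro q hq
  have hle : Submodule.span ℂ {q : MvPolynomial (Fin (n-1)) ℂ | ∃ i j : Fin (n-1), q = X i * X j}
      ≤ LinearMap.ker f :=
    Submodule.span_le.mpr fun q hq0 => LinearMap.mem_ker.mpr (hgen0 q hq0)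
  exact LinearMap.mem_ker.mp (hle hq)
end
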